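/- Let p ≤ d and L ≥ 1 be natural numbers, 0 < c ≤ C, and let A₁,…,A_L ∈ ℝ^{d×p} each have rank p with all singular values in [√c, √C] (equivalently, c‖x‖² ≤ ‖A_ℓ x‖² ≤ C‖x‖² for all x∈ℝᵖ and all ℓ). Let ζ*∈ℝᵖ and b_ℓ = A_ℓ ζ* for all ℓ, and let A ∈ ℝ^{Ld×p} and b ∈ ℝ^{Ld} be the vertical stacks of the A_ℓ and b_ℓ. Let δ be a random vector in ℝ^{Ld} whose Ld components are independent, each with mean 0 and variance σ². Define the least-squares estimator ζ_ls := (AᵀA)^{−1}Aᵀ(b+δ). Then for every ε>0: ℙ( ‖ζ_ls − ζ*‖ > ε ) ≤ σ²·p / (c·L·ε²). In particular the failure probability is of order O(p/L)·σ²/ε². -/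

import Mathlib

set_option linter.unusedSectionVars false
set_option maxHeartbeats 1000000

open MeasureTheory ProbabilityTheory Matrix

section Aux

variable {Ω : Type*} [MeasurableSpace Ω] {μ : Measure Ω} [IsProbabilityMeasure μ]
variable {ι : Type*} [Fintype ι] [DecidableEq ι] {δ : ι → Ω → ℝ}

theorem aux_pair_int (hL2 : ∀ i, MemLp (δ i) 2 μ)
    (hindep : iIndepFun δ μ) (i j : ι) :
    Integrable (fun ω => δ i ω * δ j ω) μ := by
  rcases eq_or_ne i j with rfl | hne
  · simpa [pow_two] using (hL2 i).integrable_sq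
  · exact (hindep.indepFun hne).integrable_mul ((hL2 i).integrable one_le_two)
      ((hL2 j).integrable one_le_two)

theorem aux_sq_fun_eq (a : ι → ℝ) (ω : Ω) :
    (∑ i, a i * δ i ω) ^ 2 = ∑ i, ∑ j, (a i * a j) * (δ i ω * δ j ω) := by
  rw [pow_two, Finset.sum_mul_sum]
  exact Finset.sum_congr rfl fun i _ => Finset.sum_congr rfl fun j _ => by ring

theorem aux_int (hL2 : ∀ i, MemLp (δ i) 2 μ)
    (hindep : iIndepFun δ μ) (a : ι → ℝ) :
    Integrable (fun ω => (∑ i, a i * δ i ω) ^ 2) μ := by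
  have : (fun ω => (∑ i, a i * δ i ω) ^ 2)
      = fun ω => ∑ i, ∑ j, (a i * a j) * (δ i ω * δ j ω) := by
    funext ω; exact aux_sq_fun_eq a ω
  rw [this]
  exact integrable_finset_sum _ fun i _ => integrable_finset_sum _ fun j _ =>
    (aux_pair_int hL2 hindep i j).const_mul _

theorem aux_sq (hL2 : ∀ i, MemLp (δ i) 2 μ)
    (hindep : iIndepFun δ μ) {σ : ℝ}
    (hmean : ∀ i, ∫ ω, δ i ω ∂μ = 0)
    (hvar : ∀ i, ∫ ω, (δ i ω) ^ 2 ∂μ = σ ^ 2) (a : ι → ℝ) :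
    ∫ ω, (∑ i, a i * δ i ω) ^ 2 ∂μ = σ ^ 2 * ∑ i, a i ^ 2 := by
  have hcross : ∀ i j, ∫ ω, δ i ω * δ j ω ∂μ = if i = j then σ ^ 2 else 0 := by
    intro i j
    rcases eq_or_ne i j with rfl | hne
    · rw [if_pos rfl, ← hvar i]
      exact integral_congr_ae (ae_of_all _ fun ω => (pow_two _).symm)
    · rw [if_neg hne]
      have := (hindep.indepFun hne).integral_mul_eq_mul_integral
        ((hL2 i).integrable one_le_two).aestronglyMeasurable
        ((hL2 j).integrable one_le_two).aestronglyMeasurable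
      calc ∫ ω, δ i ω * δ j ω ∂μ = ∫ ω, (δ i * δ j) ω ∂μ := rfl
        _ = (∫ ω, δ i ω ∂μ) * ∫ ω, δ j ω ∂μ := this
        _ = 0 := by rw [hmean i, zero_mul]
  calc ∫ ω, (∑ i, a i * δ i ω) ^ 2 ∂μ
      = ∫ ω, ∑ i, ∑ j, (a i * a j) * (δ i ω * δ j ω) ∂μ :=
        integral_congr_ae (ae_of_all _ fun ω => aux_sq_fun_eq a ω)
    _ = ∑ i, ∑ j, (a i * a j) * ∫ ω, δ i ω * δ j ω ∂μ := by
        rw [integral_finset_sum _ fun i _ => integrable_finset_sum _ fun j _ =>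
          (aux_pair_int hL2 hindep i j).const_mul _]
        exact Finset.sum_congr rfl fun i _ => by
          rw [integral_finset_sum _ fun j _ => (aux_pair_int hL2 hindep i j).const_mul _]
          exact Finset.sum_congr rfl fun j _ => integral_const_mul _ _
    _ = ∑ i, (a i * a i) * σ ^ 2 := by
        refine Finset.sum_congr rfl fun i _ => ?_
        rw [Finset.sum_eq_single i]
        · rw [hcross i i, if_pos rfl]
        · intro j _ hj; rw [hcross i j, if_neg (Ne.symm hj), mul_zero]
        · intro h; exact absurd (Finset.mem_univ i) h
    _ = σ ^ 2 * ∑ i, a i ^ 2 := by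
        rw [Finset.mul_sum]; exact Finset.sum_congr rfl fun i _ => by ring

end Aux


theorem aux_dot_sum {ι n : Type*} [Fintype ι] [Fintype n] (u : n → ℝ) (v : ι → n → ℝ) :
    u ⬝ᵥ (∑ i, v i) = ∑ i, u ⬝ᵥ v i := by
  simp only [dotProduct, Finset.sum_apply, Finset.mul_sum]
  exact Finset.sum_comm

theorem aux_sum_mulVec {ι n m : Type*} [Fintype ι] [Fintype n]
    (f : ι → Matrix m n ℝ) (x : n → ℝ) :
    (∑ i, f i) *ᵥ x = ∑ i, f i *ᵥ x := by
  funext j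
  simp only [Matrix.mulVec, dotProduct, Finset.sum_apply, Matrix.sum_apply, Finset.sum_mul]
  exact Finset.sum_comm

theorem aux_mulVec_sum {ι n m : Type*} [Fintype ι] [Fintype n]
    (M : Matrix m n ℝ) (v : ι → n → ℝ) :
    M *ᵥ (∑ i, v i) = ∑ i, M *ᵥ v i := by
  funext j
  simp only [Matrix.mulVec, dotProduct, Finset.sum_apply, Finset.mul_sum]
  exact Finset.sum_comm

/-- Chebyshev-type estimate for the stacked least-squares estimator: with `L` blocks
`A_ℓ ∈ ℝ^{d×p}` of rank `p` whose singular values lie in `[√c, √C]`, exact data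
`b_ℓ = A_ℓ ζ*`, and i.i.d.-type noise (independent components, mean `0`, variance `σ²`),
the least-squares solution `ζ_ls = (AᵀA)⁻¹Aᵀ(b+δ)` satisfies
`ℙ(‖ζ_ls − ζ*‖ > ε) ≤ σ² p / (c L ε²)`. -/
theorem stmt13 (p d L : ℕ) (hpd : p ≤ d) (hL : 1 ≤ L)
    (c Cb : ℝ) (hc : 0 < c) (hcC : c ≤ Cb)
    (A : Fin L → Matrix (Fin d) (Fin p) ℝ)
    (hrank : ∀ ℓ, (A ℓ).rank = p)
    (hlow : ∀ ℓ, ∀ x : Fin p → ℝ, c * ∑ j, x j ^ 2 ≤ ∑ i, (A ℓ *ᵥ x) i ^ 2)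
    (hup : ∀ ℓ, ∀ x : Fin p → ℝ, ∑ i, (A ℓ *ᵥ x) i ^ 2 ≤ Cb * ∑ j, x j ^ 2)
    (ζs : Fin p → ℝ)
    (Ω : Type*) [MeasurableSpace Ω] (μ : Measure Ω) [IsProbabilityMeasure μ]
    (δ : Fin L × Fin d → Ω → ℝ)
    (hmeas : ∀ i, Measurable (δ i))
    (hL2 : ∀ i, MemLp (δ i) 2 μ)
    (hindep : iIndepFun δ μ)
    (σ : ℝ)
    (hmean : ∀ i, ∫ ω, δ i ω ∂μ = 0)
    (hvar : ∀ i, ∫ ω, (δ i ω) ^ 2 ∂μ = σ ^ 2) :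
    ∀ ε : ℝ, 0 < ε →
      μ {ω | ε < Real.sqrt (∑ j,
          (((∑ ℓ, (A ℓ)ᵀ * A ℓ)⁻¹ *ᵥ
              (∑ ℓ, (A ℓ)ᵀ *ᵥ (A ℓ *ᵥ ζs + fun i => δ (ℓ, i) ω))) j - ζs j) ^ 2)}
        ≤ ENNReal.ofReal (σ ^ 2 * p / (c * L * ε ^ 2)) := by
  intro ε hε
  rcases Nat.eq_zero_or_pos p with hp | hp
  · subst hp
    have hset : {ω | ε < Real.sqrt (∑ j : Fin 0,
          (((∑ ℓ, (A ℓ)ᵀ * A ℓ)⁻¹ *ᵥ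
              (∑ ℓ, (A ℓ)ᵀ *ᵥ (A ℓ *ᵥ ζs + fun i => δ (ℓ, i) ω))) j - ζs j) ^ 2)} = ∅ := by
      ext ω
      simp only [Set.mem_setOf_eq, Set.mem_empty_iff_false, iff_false, not_lt,
        Finset.univ_eq_empty, Finset.sum_empty, Real.sqrt_zero]
      exact hε.le
    rw [hset, measure_empty]
    exact zero_le'
  -- main case
  have hd : 0 < d := lt_of_lt_of_le hp hpd
  have hσ : 0 ≤ σ ^ 2 := by
    rw [← hvar (⟨0, hL⟩, ⟨0, hd⟩)]
    exact integral_nonneg fun ω => sq_nonneg _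
  set M : Matrix (Fin p) (Fin p) ℝ := ∑ ℓ, (A ℓ)ᵀ * A ℓ with hMdef
  have hcL : 0 < c * L := by positivity
  have hqf : ∀ x : Fin p → ℝ, x ⬝ᵥ (M *ᵥ x) = ∑ ℓ, ∑ i, (A ℓ *ᵥ x) i ^ 2 := by
    intro x
    rw [hMdef, aux_sum_mulVec, aux_dot_sum]
    refine Finset.sum_congr rfl fun ℓ _ => ?_
    rw [← Matrix.mulVec_mulVec, Matrix.dotProduct_mulVec, Matrix.vecMul_transpose]
    exact Finset.sum_congr rfl fun i _ => (pow_two _).symm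
  have hqflow : ∀ x : Fin p → ℝ, (c * L) * ∑ j, x j ^ 2 ≤ x ⬝ᵥ (M *ᵥ x) := by
    intro x
    rw [hqf]
    calc (c * L) * ∑ j, x j ^ 2 = ∑ _ℓ : Fin L, c * ∑ j, x j ^ 2 := by
          rw [Finset.sum_const, Finset.card_univ, Fintype.card_fin, nsmul_eq_mul]; ring
      _ ≤ ∑ ℓ, ∑ i, (A ℓ *ᵥ x) i ^ 2 := Finset.sum_le_sum fun ℓ _ => hlow ℓ x
  have hMpos : M.PosDef := by
    refine Matrix.PosDef.of_dotProduct_mulVec_pos ?_ ?_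
    · rw [hMdef]
      apply Finset.sum_induction _ Matrix.IsHermitian
      · exact fun _ _ => Matrix.IsHermitian.add
      · exact Matrix.isHermitian_zero
      · intro ℓ _
        simpa using Matrix.isHermitian_conjTranspose_mul_self (A ℓ)
    · intro x hx
      have hxs : 0 < ∑ j, x j ^ 2 := by
        obtain ⟨j, hj⟩ := Function.ne_iff.mp hx
        exact Finset.sum_pos' (fun _ _ => sq_nonneg _)
          ⟨j, Finset.mem_univ j, sq_pos_of_ne_zero hj⟩
      have := lt_of_lt_of_le (mul_pos hcL hxs) (hqflow x)
      simpa [star_trivial] using this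
  have hMdet : IsUnit M.det := hMpos.det_pos.ne'.isUnit
  have hMinv : M * M⁻¹ = 1 := Matrix.mul_nonsing_inv M hMdet
  have hMinv' : M⁻¹ * M = 1 := Matrix.nonsing_inv_mul M hMdet
  have hMsymm : Mᵀ = M := by
    have := hMpos.isHermitian.eq
    simpa [Matrix.conjTranspose_eq_transpose_of_trivial] using this
  -- coefficient matrix
  set B : (Fin p) → (Fin L × Fin d) → ℝ := fun j q => (M⁻¹ * (A q.1)ᵀ) j q.2 with hBdef
  -- error vector identity
  have hvec : ∀ ω j, ((M⁻¹ *ᵥ (∑ ℓ, (A ℓ)ᵀ *ᵥ (A ℓ *ᵥ ζs + fun i => δ (ℓ, i) ω))) j - ζs j)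
      = ∑ q : Fin L × Fin d, B j q * δ q ω := by
    intro ω j
    have h1 : (∑ ℓ, (A ℓ)ᵀ *ᵥ (A ℓ *ᵥ ζs + fun i => δ (ℓ, i) ω))
        = M *ᵥ ζs + ∑ ℓ, (A ℓ)ᵀ *ᵥ (fun i => δ (ℓ, i) ω) := by
      rw [hMdef, aux_sum_mulVec, ← Finset.sum_add_distrib]
      exact Finset.sum_congr rfl fun ℓ _ => by
        rw [Matrix.mulVec_add, Matrix.mulVec_mulVec]
    rw [h1, Matrix.mulVec_add, Matrix.mulVec_mulVec, hMinv', Matrix.one_mulVec]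
    simp only [Pi.add_apply, add_sub_cancel_left]
    have h2 : M⁻¹ *ᵥ (∑ ℓ, (A ℓ)ᵀ *ᵥ (fun i => δ (ℓ, i) ω))
        = ∑ ℓ, (M⁻¹ * (A ℓ)ᵀ) *ᵥ (fun i => δ (ℓ, i) ω) := by
      rw [aux_mulVec_sum]
      exact Finset.sum_congr rfl fun ℓ _ => by rw [Matrix.mulVec_mulVec]
    rw [h2]
    rw [Fintype.sum_prod_type]
    simp only [Finset.sum_apply, Matrix.mulVec, dotProduct]
    rfl
  -- the nonnegative statistic
  set X : Ω → ℝ := fun ω => ∑ j, (∑ q : Fin L × Fin d, B j q * δ q ω) ^ 2 with hXdef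
  have hXnn : ∀ ω, 0 ≤ X ω := fun ω => Finset.sum_nonneg fun j _ => sq_nonneg _
  have hXint : Integrable X μ :=
    integrable_finset_sum _ fun j _ => aux_int hL2 hindep (B j)
  -- trace bound
  have hdiag : ∀ j, M⁻¹ j j ≤ 1 / (c * L) := by
    intro j
    set x : Fin p → ℝ := M⁻¹ *ᵥ Pi.single j 1 with hxdef
    have hxj : x j = M⁻¹ j j := by
      rw [hxdef]; simp [Matrix.mulVec_single]
    have hMx : M *ᵥ x = Pi.single j 1 := by
      rw [hxdef, Matrix.mulVec_mulVec, hMinv, Matrix.one_mulVec]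
    have h2 : x ⬝ᵥ (M *ᵥ x) = x j := by
      rw [hMx, dotProduct_single, mul_one]
    have h1 := hqflow x
    rw [h2] at h1
    set t : ℝ := ∑ k, x k ^ 2 with htdef
    have ht : 0 ≤ t := Finset.sum_nonneg fun _ _ => sq_nonneg _
    have hxt2 : x j ^ 2 ≤ t :=
      Finset.single_le_sum (fun k _ => sq_nonneg (x k)) (Finset.mem_univ j)
    have hxle : x j ≤ Real.sqrt t := by
      calc x j ≤ |x j| := le_abs_self _
        _ = Real.sqrt (x j ^ 2) := (Real.sqrt_sq_eq_abs _).symm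
        _ ≤ Real.sqrt t := Real.sqrt_le_sqrt hxt2
    set s : ℝ := Real.sqrt t with hsdef
    have hs : 0 ≤ s := Real.sqrt_nonneg _
    have hst : s ^ 2 = t := Real.sq_sqrt ht
    rw [← hxj]
    -- c*L*s^2 ≤ x j ≤ s  ⟹  x j ≤ 1/(c*L)
    rw [← hst] at h1
    rw [le_div_iff₀ hcL, mul_comm]
    nlinarith [mul_le_mul_of_nonneg_left hxle hcL.le, sq_nonneg (c * L * s - 1)]
  have htrace : ∑ j, ∑ q : Fin L × Fin d, B j q ^ 2 ≤ p / (c * L) := by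
    have hmat : ∑ ℓ, (M⁻¹ * (A ℓ)ᵀ) * (M⁻¹ * (A ℓ)ᵀ)ᵀ = M⁻¹ := by
      have h1 : ∀ ℓ, (M⁻¹ * (A ℓ)ᵀ) * (M⁻¹ * (A ℓ)ᵀ)ᵀ
          = M⁻¹ * (((A ℓ)ᵀ * A ℓ) * (M⁻¹)ᵀ) := by
        intro ℓ
        rw [Matrix.transpose_mul, Matrix.transpose_transpose, Matrix.mul_assoc,
          ← Matrix.mul_assoc ((A ℓ)ᵀ)]
      rw [Finset.sum_congr rfl fun ℓ _ => h1 ℓ, ← Matrix.mul_sum, ← Matrix.sum_mul,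
        ← hMdef, Matrix.transpose_nonsing_inv, hMsymm, Matrix.mul_nonsing_inv _ hMdet,
        Matrix.mul_one]
    have hBB : ∀ j, ∑ q : Fin L × Fin d, B j q ^ 2 = M⁻¹ j j := by
      intro j
      have h2 : ∀ ℓ, ∑ i, B j (ℓ, i) ^ 2
          = ((M⁻¹ * (A ℓ)ᵀ) * (M⁻¹ * (A ℓ)ᵀ)ᵀ) j j := by
        intro ℓ
        rw [Matrix.mul_apply]
        exact Finset.sum_congr rfl fun i _ => by
          rw [Matrix.transpose_apply, pow_two]
      rw [Fintype.sum_prod_type, Finset.sum_congr rfl fun ℓ _ => h2 ℓ,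
        ← Matrix.sum_apply, hmat]
    calc ∑ j, ∑ q : Fin L × Fin d, B j q ^ 2 = ∑ j : Fin p, M⁻¹ j j := by
          exact Finset.sum_congr rfl fun j _ => hBB j
      _ ≤ ∑ _j : Fin p, 1 / (c * L) := Finset.sum_le_sum fun j _ => hdiag j
      _ = p / (c * L) := by
          rw [Finset.sum_const, Finset.card_univ, Fintype.card_fin, nsmul_eq_mul]; ring
  -- expectation
  have hEX : ∫ ω, X ω ∂μ ≤ σ ^ 2 * (p / (c * L)) := by
    have : ∫ ω, X ω ∂μ = σ ^ 2 * ∑ j, ∑ q : Fin L × Fin d, B j q ^ 2 := by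
      rw [hXdef]
      simp only
      rw [integral_finset_sum _ fun j _ => aux_int hL2 hindep (B j), Finset.mul_sum]
      exact Finset.sum_congr rfl fun j _ => aux_sq hL2 hindep hmean hvar (B j)
    rw [this]
    exact mul_le_mul_of_nonneg_left htrace hσ
  -- Markov
  have hmar := mul_meas_ge_le_integral_of_nonneg (ae_of_all μ hXnn) hXint (ε ^ 2)
  have hsub : {ω | ε < Real.sqrt (∑ j,
          (((∑ ℓ, (A ℓ)ᵀ * A ℓ)⁻¹ *ᵥ
              (∑ ℓ, (A ℓ)ᵀ *ᵥ (A ℓ *ᵥ ζs + fun i => δ (ℓ, i) ω))) j - ζs j) ^ 2)}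
      ⊆ {ω | ε ^ 2 ≤ X ω} := by
    intro ω hω
    simp only [Set.mem_setOf_eq] at hω ⊢
    have hXeq : (∑ j, (((∑ ℓ, (A ℓ)ᵀ * A ℓ)⁻¹ *ᵥ
        (∑ ℓ, (A ℓ)ᵀ *ᵥ (A ℓ *ᵥ ζs + fun i => δ (ℓ, i) ω))) j - ζs j) ^ 2) = X ω := by
      rw [hXdef]
      exact Finset.sum_congr rfl fun j _ => by rw [← hMdef, hvec ω j]
    rw [hXeq] at hω
    exact ((Real.lt_sqrt hε.le).mp hω).le
  have hμS : (μ {ω | ε ^ 2 ≤ X ω}).toReal ≤ σ ^ 2 * ↑p / (c * L * ε ^ 2) := by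
    have hε2 : (0:ℝ) < ε ^ 2 := by positivity
    have h := le_trans hmar hEX
    have heq : σ ^ 2 * ↑p / (c * L * ε ^ 2) = σ ^ 2 * (↑p / (c * L)) / ε ^ 2 := by
      field_simp
    rw [heq, le_div_iff₀ hε2, mul_comm]
    exact h
  calc μ {ω | ε < Real.sqrt (∑ j,
          (((∑ ℓ, (A ℓ)ᵀ * A ℓ)⁻¹ *ᵥ
              (∑ ℓ, (A ℓ)ᵀ *ᵥ (A ℓ *ᵥ ζs + fun i => δ (ℓ, i) ω))) j - ζs j) ^ 2)}
      ≤ μ {ω | ε ^ 2 ≤ X ω} := measure_mono hsub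
    _ = ENNReal.ofReal (μ {ω | ε ^ 2 ≤ X ω}).toReal :=
        (ENNReal.ofReal_toReal (measure_ne_top μ _)).symm
    _ ≤ ENNReal.ofReal (σ ^ 2 * ↑p / (c * L * ε ^ 2)) := ENNReal.ofReal_le_ofReal hμS
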